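/- Let w̃ ∈ W̃, let θ ∈ [0,π], and let K ⊆ V^θ_{w̃} be a linear subspace with w̃(K) = K. Let A be a Weyl chamber such that A and w̃(A) lie in the same connected component of V − ∪_{H∈𝔥_K} H, and suppose the closure of A contains a nonzero vector v ∈ K such that for every H ∈ 𝔥, if v ∈ H and w̃(v) ∈ H then K ⊆ H. Then ℓ(w̃_A) = #𝔥(A, w̃(A)) = (θ/π)·#(𝔥 − 𝔥_K). -/

import Mathlib

open SemidirectProduct Set

section

variable {B W : Type*} [Group W]

/-- The extended group `W̃ = ⟨δ⟩ ⋉ W`. -/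
abbrev Wtilde (δ : MulAut W) := W ⋊[(Subgroup.zpowers δ).subtype] ↥(Subgroup.zpowers δ)

variable {M : CoxeterMatrix B} {δ : MulAut W} (cs : CoxeterSystem M W)

/-- The length function on `W̃`, extended from `W` by `ℓ(δ^i w) = ℓ(w)`. -/
noncomputable def tlen (x : Wtilde δ) : ℕ :=
  cs.length (((x.right : MulAut W))⁻¹ x.left)

/-- One step of conjugation by a simple reflection: `w̃ →_s w̃'`. -/
def cstep (x y : Wtilde δ) : Prop :=
  ∃ i : B, y = inl (cs.simple i) * x * inl (cs.simple i) ∧ tlen cs y ≤ tlen cs x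

variable {V : Type*} [NormedAddCommGroup V] [InnerProductSpace ℝ V] [FiniteDimensional ℝ V]
variable (ρ : Wtilde δ →* (V ≃ₗᵢ[ℝ] V))

/-- The set `𝔥` of hyperplanes of `V` whose orthogonal reflection is realized by an
element of `W`. -/
noncomputable def mirrors : Set (Submodule ℝ V) :=
  {H | Module.finrank ℝ H + 1 = Module.finrank ℝ V ∧
    ∃ w : W, ρ (inl w) = H.reflection}

/-- The complement of the union of all the reflecting hyperplanes. -/
def chamberDom : Set V := {v | ∀ H ∈ mirrors ρ, v ∉ H}

/-- A Weyl chamber: a connected component of the complement of the mirrors. -/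
def IsChamber (A : Set V) : Prop :=
  ∃ v ∈ chamberDom ρ, A = connectedComponentIn (chamberDom ρ) v

/-- The hyperplane `H` separates `a` and `b`: the segment from `a` to `b` meets `H`. -/
def SepPts (H : Submodule ℝ V) (a b : V) : Prop := ∃ x ∈ segment ℝ a b, x ∈ H

/-- The set `𝔥(A, A')` of reflecting hyperplanes separating `A` and `A'`. -/
noncomputable def sepSet (A A' : Set V) : Set (Submodule ℝ V) :=
  {H | H ∈ mirrors ρ ∧ ∀ a ∈ A, ∀ b ∈ A', SepPts H a b}

/-- `v` is a regular point of the convex set `K`: every reflecting hyperplane through `v`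
contains `K`. -/
def IsRegPt (K : Set V) (v : V) : Prop :=
  v ∈ K ∧ ∀ H ∈ mirrors ρ, v ∈ H → K ⊆ (H : Set V)

/-- The submodule `V^W` of `W`-fixed points. -/
def fixedW : Submodule ℝ V where
  carrier := {v | ∀ w : W, ρ (inl w) v = v}
  add_mem' := by
    intro a b ha hb w
    simp only [map_add, ha w, hb w]
  zero_mem' := by
    intro w
    simp
  smul_mem' := by
    intro c a ha w
    simp only [map_smul, ha w]

/-- The "eigenspace" `V^θ_{w̃} = {v | w̃ v + w̃⁻¹ v = 2 cos θ · v}`. -/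
def eigSp (x : Wtilde δ) (θ : ℝ) : Submodule ℝ V where
  carrier := {v | ρ x v + ρ x⁻¹ v = (2 * Real.cos θ) • v}
  add_mem' := by
    intro a b ha hb
    simp only [Set.mem_setOf_eq, map_add] at *
    rw [smul_add, ← ha, ← hb]
    abel
  zero_mem' := by simp
  smul_mem' := by
    intro c a ha
    simp only [Set.mem_setOf_eq, map_smul] at *
    rw [← smul_add, ha, smul_comm]

/-- `V_{w̃} = V^{θ₀}_{w̃} ∩ (V^W)^⊥`. -/
noncomputable def Vmin (x : Wtilde δ) (θ₀ : ℝ) : Submodule ℝ V :=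
  eigSp ρ x θ₀ ⊓ (fixedW ρ)ᗮ

/-- The complement of the union of the mirrors containing `K`
(whose connected components house the chambers adapted to `K`). -/
def chamberDomK (K : Set V) : Set V :=
  {v | ∀ H ∈ mirrors ρ, K ⊆ (H : Set V) → v ∉ H}

/-- The face of (the chamber) `A` in the hyperplane `H`: the interior, in `H`, of `H ∩ Ā`. -/
def faceIn (H : Submodule ℝ V) (A : Set V) : Set V :=
  Subtype.val '' (interior {h : H | (h : V) ∈ closure A})

/-- The subgroup `W_K` of `W` generated by the reflections in the mirrors containing `K`. -/
noncomputable def WKsub (K : Set V) : Subgroup W :=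
  Subgroup.closure {w : W | ∃ H ∈ mirrors ρ, K ⊆ (H : Set V) ∧ ρ (inl w) = H.reflection}

end



open Real

lemma sign_sin_iff_odd_ceil {u : ℝ} (hu : Real.sin u ≠ 0) :
    (0 < Real.sin u ↔ Odd ⌈u / π⌉) := by
  set c : ℤ := ⌈u / π⌉ with hc
  have hπ : (0:ℝ) < π := Real.pi_pos
  have h1 : u ≤ c * π := by
    rw [← div_le_iff₀ hπ]; exact_mod_cast Int.le_ceil (u / π)
  have h2 : ((c : ℝ) - 1) * π < u := by
    rw [← lt_div_iff₀ hπ]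
    linarith [Int.ceil_lt_add_one (u / π)]
  have hne : u ≠ c * π := by
    intro h
    apply hu
    rw [h]
    simpa using Real.sin_int_mul_pi c
  have h3 : u < c * π := lt_of_le_of_ne h1 hne
  have hs : Real.sin u = (-1 : ℝ) ^ (c - 1) * Real.sin (u - ((c:ℝ)-1) * π) := by
    have := Real.sin_add_int_mul_pi (u - ((c:ℝ)-1)*π) (c-1)
    push_cast at this
    rw [sub_add_cancel] at this
    exact this
  have hw : 0 < Real.sin (u - ((c:ℝ)-1) * π) :=
    Real.sin_pos_of_pos_of_lt_pi (by linarith) (by nlinarith)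
  rw [hs]
  constructor
  · intro h
    by_contra hodd
    have he : Odd (c - 1) := by
      rcases Int.not_odd_iff_even.mp hodd with ⟨m, hm⟩
      exact ⟨m - 1, by omega⟩
    rw [he.neg_one_zpow] at h
    nlinarith
  · intro hodd
    have he : Even (c - 1) := by
      rcases hodd with ⟨m, hm⟩
      exact ⟨m, by omega⟩
    rw [he.neg_one_zpow]
    nlinarith

lemma even_iff_odd_succ (n : ℤ) : Even n ↔ Odd (n + 1) := by
  constructor
  · rintro ⟨j, hj⟩; exact ⟨j, by omega⟩
  · rintro ⟨j, hj⟩; exact ⟨j, by omega⟩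

lemma core_count {θ ψ : ℝ} (hθ0 : 0 < θ) (hθπ : θ < π) {d : ℕ} {q : ℤ}
    (hdθ : (d:ℝ) * θ = 2 * π * q)
    (σ : ℕ → Prop) [DecidablePred σ]
    (hσ : ∀ k : ℕ, Real.sin ((k:ℝ) * θ + ψ) ≠ 0 → (σ k ↔ 0 < Real.sin ((k:ℝ)*θ + ψ)))
    (hper : σ d ↔ σ 0) :
    ∑ k ∈ Finset.range d, (if σ k ↔ σ (k+1) then 0 else 1 : ℤ) = 2 * q := by
  classical
  have hπ : (0:ℝ) < π := Real.pi_pos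
  set u : ℕ → ℝ := fun k => (k:ℝ) * θ + ψ with hu
  set m : ℕ → ℤ := fun k => ⌈u k / π⌉ with hm
  set c : ℕ → ℤ := fun k => if (σ k ↔ Odd (m k)) then m k else m k + 1 with hcdef
  -- parity of c matches σ
  have hpar : ∀ k, (σ k ↔ Odd (c k)) := by
    intro k
    by_cases h : σ k ↔ Odd (m k)
    · simp only [hcdef, if_pos h]; exact h
    · simp only [hcdef, if_neg h]
      have h2 : σ k ↔ ¬ Odd (m k) := by tauto
      rw [h2, Int.not_odd_iff_even]
      exact even_iff_odd_succ (m k)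
  -- when sin (u k) ≠ 0 we have c k = m k
  have hcm : ∀ k, Real.sin (u k) ≠ 0 → c k = m k := by
    intro k hk
    have := (hσ k hk).trans (sign_sin_iff_odd_ceil hk)
    simp only [hcdef, hm]
    exact if_pos this
  -- basic interval facts for u
  have hustep : ∀ k : ℕ, u (k+1) = u k + θ := by
    intro k; simp only [hu]; push_cast; ring
  have hmono : ∀ k, m k ≤ m (k+1) := by
    intro k
    apply Int.ceil_le_ceil
    rw [hustep]
    gcongr
    linarith
  have hmstep : ∀ k, m (k+1) ≤ m k + 1 := by
    intro k
    have : u (k+1) / π ≤ u k / π + 1 := by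
      rw [hustep, add_div]
      have : θ / π ≤ 1 := by
        rw [div_le_one hπ]; linarith
      linarith
    calc m (k+1) ≤ ⌈u k / π + 1⌉ := Int.ceil_le_ceil this
      _ = m k + 1 := by rw [Int.ceil_add_one]
  -- if sin (u k) = 0 then sin (u (k+1)) ≠ 0, and ceil jumps by one
  have hzero : ∀ k, Real.sin (u k) = 0 →
      Real.sin (u (k+1)) ≠ 0 ∧ m k = ⌈u k / π⌉ ∧ u k = (m k) * π ∧ m (k+1) = m k + 1 := by
    intro k hk
    rcases Real.sin_eq_zero_iff.mp hk with ⟨n, hn⟩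
    have hmk : m k = n := by
      simp only [hm]
      rw [← hn, mul_div_cancel_right₀ _ hπ.ne']
      exact Int.ceil_intCast n
    have huk : u k = (m k) * π := by rw [hmk, hn]
    have h1 : Real.sin (u (k+1)) ≠ 0 := by
      intro h
      rcases Real.sin_eq_zero_iff.mp h with ⟨n', hn'⟩
      rw [hustep, ← hn] at hn'
      have : ((n' - n : ℤ) : ℝ) * π = θ := by push_cast; linarith
      rcases lt_trichotomy (n' - n : ℤ) 0 with h' | h' | h'
      · have : ((n' - n : ℤ) : ℝ) * π ≤ -π := by
          have h2 : (n' - n : ℤ) ≤ -1 := by omega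
          have : ((n' - n : ℤ) : ℝ) ≤ -1 := by exact_mod_cast h2
          nlinarith
        linarith
      · rw [h'] at this; simp at this; linarith
      · have : (1:ℝ) ≤ ((n' - n : ℤ) : ℝ) := by exact_mod_cast h'
        nlinarith
    have h2 : m (k+1) = m k + 1 := by
      have hlo : (m k : ℝ) < u (k+1) / π := by
        rw [hustep, huk]
        rw [lt_div_iff₀ hπ]
        nlinarith
      have hhi : u (k+1) / π ≤ (m k : ℝ) + 1 := by
        rw [hustep, huk, div_le_iff₀ hπ]
        nlinarith
      have h3 : m (k+1) ≤ m k + 1 :=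
        Int.ceil_le.mpr (by exact_mod_cast hhi : u (k+1)/π ≤ ((m k + 1 : ℤ) : ℝ))
      have h4 : m k + 1 ≤ m (k+1) := by
        by_contra hc
        push_neg at hc
        have h5 : m (k+1) ≤ m k := by omega
        have h6 : (m (k+1) : ℝ) ≤ (m k : ℝ) := by exact_mod_cast h5
        have h7 : u (k+1) / π ≤ (m (k+1) : ℝ) := Int.le_ceil _
        linarith
      omega
    exact ⟨h1, rfl, huk, h2⟩
  -- each step of c is 0 or 1, with parity matching
  have hstep : ∀ k, c (k+1) = c k ∨ c (k+1) = c k + 1 := by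
    intro k
    by_cases h0 : Real.sin (u k) = 0
    · -- c k = m k or m k + 1; next is clean
      obtain ⟨h1, -, -, h4⟩ := hzero k h0
      have hc1 : c (k+1) = m (k+1) := hcm _ h1
      have : c k = m k ∨ c k = m k + 1 := by
        simp only [hcdef]; split <;> simp
      rcases this with h | h
      · right; rw [hc1, h4, h]
      · left; rw [hc1, h4, h]
    · have hck : c k = m k := hcm _ h0
      by_cases h1 : Real.sin (u (k+1)) = 0
      · -- then sin (u k) ≠ 0 automatically; m (k+1) = m k
        obtain ⟨-, -, huk1, -⟩ := hzero (k+1) h1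
        have hmeq : m (k+1) = m k := by
          -- u k = u (k+1) - θ ∈ ((m (k+1) - 1)π, m (k+1) π)
          have hlo : ((m (k+1) : ℝ)) - 1 < u k / π := by
            rw [lt_div_iff₀ hπ]
            have := hustep k
            nlinarith [huk1]
          have hhi : u k / π ≤ (m (k+1) : ℝ) := by
            rw [div_le_iff₀ hπ]
            have := hustep k
            nlinarith [huk1]
          have ha : m k ≤ m (k+1) := Int.ceil_le.mpr (by exact_mod_cast hhi)
          have hb : m (k+1) - 1 < m k := by
            by_contra hc
            push_neg at hc
            have h6 : (m k : ℝ) ≤ (m (k+1) : ℝ) - 1 := by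
              have h7 : (m k : ℤ) ≤ m (k+1) - 1 := by omega
              have h8 : ((m k : ℤ) : ℝ) ≤ ((m (k+1) - 1 : ℤ) : ℝ) := by exact_mod_cast h7
              push_cast at h8
              linarith
            have h8 : u k / π ≤ (m k : ℝ) := Int.le_ceil _
            linarith
          omega
        have : c (k+1) = m (k+1) ∨ c (k+1) = m (k+1) + 1 := by
          simp only [hcdef]; split <;> simp
        rcases this with h | h
        · left; rw [h, hmeq, hck]
        · right; rw [h, hmeq, hck]
      · have hc1 : c (k+1) = m (k+1) := hcm _ h1
        rcases (hmono k).lt_or_eq with h | h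
        · right; rw [hc1, hck]; have := hmstep k; omega
        · left; rw [hc1, hck, h]
  -- value of c at d
  have hcd : c d = c 0 + 2 * q := by
    have hud : u d = u 0 + (2 * q) * π := by
      simp only [hu]
      push_cast
      rw [hdθ]; ring
    have hmd : m d = m 0 + 2 * q := by
      simp only [hm, hud]
      rw [add_div, mul_div_assoc, div_self hπ.ne', mul_one]
      exact_mod_cast Int.ceil_add_intCast (u 0 / π) (2 * q)
    have hodd : Odd (m d) ↔ Odd (m 0) := by
      rw [hmd]; constructor
      · rintro ⟨j, hj⟩; exact ⟨j - q, by omega⟩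
      · rintro ⟨j, hj⟩; exact ⟨j + q, by omega⟩
    have hbranch : ((σ d ↔ Odd (m d))) ↔ (σ 0 ↔ Odd (m 0)) := by
      rw [hper, hodd]
    simp only [hcdef]
    by_cases h : σ 0 ↔ Odd (m 0)
    · rw [if_pos (hbranch.mpr h), if_pos h, hmd]
    · rw [if_neg (fun hh => h (hbranch.mp hh)), if_neg h, hmd]; ring
  -- telescoping
  have hterm : ∀ k, (if σ k ↔ σ (k+1) then (0:ℤ) else 1) = c (k+1) - c k := by
    intro k
    rcases hstep k with h | h
    · rw [h, sub_self, if_pos]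
      rw [hpar k, hpar (k+1), h]
    · rw [h]
      rw [if_neg]
      · ring
      · rw [hpar k, hpar (k+1), h]
        intro hiff
        have := (even_iff_odd_succ (c k)).symm
        rcases Int.even_or_odd (c k) with he | ho
        · exact (Int.not_odd_iff_even.mpr he) (hiff.mpr ((even_iff_odd_succ (c k)).mp he))
        · have : Odd (c k + 1) := hiff.mp ho
          rcases ho with ⟨a, ha⟩
          rcases this with ⟨b, hb⟩
          omega
  calc ∑ k ∈ Finset.range d, (if σ k ↔ σ (k+1) then 0 else 1 : ℤ)
      = ∑ k ∈ Finset.range d, (c (k+1) - c k) := by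
        apply Finset.sum_congr rfl; intro k _; exact hterm k
    _ = c d - c 0 := Finset.sum_range_sub c d
    _ = 2 * q := by rw [hcd]; ring

lemma core_count' {θ : ℝ} (hθ0 : 0 < θ) (hθπ : θ < Real.pi) {d : ℕ} {q : ℤ}
    (hdθ : (d:ℝ) * θ = 2 * Real.pi * q) {α β : ℝ} (hab : ¬(α = 0 ∧ β = 0))
    (σ : ℕ → Prop) [DecidablePred σ]
    (hσ : ∀ k : ℕ, α * Real.cos ((k:ℝ)*θ) + β * Real.sin ((k:ℝ)*θ) ≠ 0 →
      (σ k ↔ 0 < α * Real.cos ((k:ℝ)*θ) + β * Real.sin ((k:ℝ)*θ)))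
    (hper : σ d ↔ σ 0) :
    ∑ k ∈ Finset.range d, (if σ k ↔ σ (k+1) then 0 else 1 : ℤ) = 2 * q := by
  set z : ℂ := ⟨β, α⟩ with hzdef
  have hz : z ≠ 0 := by
    intro h
    apply hab
    constructor
    · have := congrArg Complex.im h
      simpa [hzdef] using this
    · have := congrArg Complex.re h
      simpa [hzdef] using this
  set R : ℝ := ‖z‖ with hRdef
  have hR : 0 < R := norm_pos_iff.mpr hz
  set ψ : ℝ := Complex.arg z with hψdef
  have hcosψ : R * Real.cos ψ = β := by
    have hn : ‖z‖ ≠ 0 := norm_ne_zero_iff.mpr hz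
    rw [hψdef, Complex.cos_arg hz, hRdef]
    show ‖z‖ * (β / ‖z‖) = β
    field_simp
  have hsinψ : R * Real.sin ψ = α := by
    have hn : ‖z‖ ≠ 0 := norm_ne_zero_iff.mpr hz
    rw [hψdef, Complex.sin_arg, hRdef]
    show ‖z‖ * (α / ‖z‖) = α
    field_simp
  have hg : ∀ w : ℝ, α * Real.cos w + β * Real.sin w = R * Real.sin (w + ψ) := by
    intro w
    rw [Real.sin_add, ← hcosψ, ← hsinψ]
    ring
  apply core_count (ψ := ψ) hθ0 hθπ hdθ σ ?_ hper
  intro k hk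
  have h2 : α * Real.cos ((k:ℝ)*θ) + β * Real.sin ((k:ℝ)*θ) ≠ 0 := by
    rw [hg]
    intro h
    apply hk
    rcases mul_eq_zero.mp h with h' | h'
    · exact absurd h' hR.ne'
    · exact h'
  have h3 := hσ k h2
  rw [hg] at h3
  rw [h3]
  constructor
  · intro h
    nlinarith
  · intro h
    nlinarith

section Aux

open SemidirectProduct Set

variable {B W : Type*} [Group W] {M : CoxeterMatrix B} {δ : MulAut W}
variable {V : Type*} [NormedAddCommGroup V] [InnerProductSpace ℝ V] [FiniteDimensional ℝ V]
variable (ρ : Wtilde δ →* (V ≃ₗᵢ[ℝ] V))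

local notation "⟪" a ", " b "⟫" => (inner ℝ a b : ℝ)

/-- Every mirror has a normal vector. -/
lemma aux_exists_normal {H : Submodule ℝ V} (hH : H ∈ mirrors ρ) :
    ∃ n : V, n ≠ 0 ∧ ∀ w : V, ⟪n, w⟫ = 0 ↔ w ∈ H := by
  have hd := hH.1
  have hfr : Module.finrank ℝ (Hᗮ : Submodule ℝ V) = 1 := by
    have := Submodule.finrank_add_finrank_orthogonal (K := H)
    omega
  have hne : (Hᗮ : Submodule ℝ V) ≠ ⊥ := by
    intro h
    rw [h] at hfr
    simp at hfr
  obtain ⟨n, hnmem, hn0⟩ := Submodule.ne_bot_iff _ |>.mp hne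
  refine ⟨n, hn0, fun w => ?_⟩
  have hspan : (ℝ ∙ n) = Hᗮ := by
    apply Submodule.eq_of_le_of_finrank_eq
    · rwa [Submodule.span_singleton_le_iff_mem]
    · rw [finrank_span_singleton hn0, hfr]
  constructor
  · intro h
    have hw : w ∈ (ℝ ∙ n)ᗮ := Submodule.mem_orthogonal_singleton_iff_inner_right.mpr h
    rw [hspan, Submodule.orthogonal_orthogonal] at hw
    exact hw
  · intro h
    have : w ∈ (Hᗮ)ᗮ := by rw [Submodule.orthogonal_orthogonal]; exact h
    rw [← hspan] at this
    exact Submodule.mem_orthogonal_singleton_iff_inner_right.mp this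

/-- Sign constancy on preconnected sets avoiding the zero set of a linear functional. -/
lemma aux_sign_const {n : V} {A' : Set V} (hA : IsPreconnected A')
    (hsub : ∀ w ∈ A', ⟪n, w⟫ ≠ 0) {a b : V} (ha : a ∈ A') (hb : b ∈ A') :
    (0 < ⟪n, a⟫ ↔ 0 < ⟪n, b⟫) := by
  have hcont : Continuous fun w : V => ⟪n, w⟫ := continuous_const.inner continuous_id
  have himg : IsPreconnected ((fun w : V => ⟪n, w⟫) '' A') := hA.image _ hcont.continuousOn
  have main : ∀ p q : V, p ∈ A' → q ∈ A' → 0 < ⟪n, p⟫ → ⟪n, q⟫ < 0 → False := by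
    intro p q hp hq hpp hqq
    have hord := himg.ordConnected
    have h0 : (0:ℝ) ∈ Set.Icc ⟪n, q⟫ ⟪n, p⟫ := ⟨hqq.le, hpp.le⟩
    have := hord.out ⟨q, hq, rfl⟩ ⟨p, hp, rfl⟩ h0
    obtain ⟨c, hc, hc0⟩ := this
    exact hsub c hc hc0
  constructor
  · intro h
    rcases lt_trichotomy (0:ℝ) ⟪n, b⟫ with h' | h' | h'
    · exact h'
    · exact absurd h'.symm (hsub b hb)
    · exact (main a b ha hb h h').elim
  · intro h
    rcases lt_trichotomy (0:ℝ) ⟪n, a⟫ with h' | h' | h'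
    · exact h'
    · exact absurd h'.symm (hsub a ha)
    · exact (main b a hb ha h h').elim

/-- If the signs at the endpoints are (weakly) opposite, the segment meets the hyperplane. -/
lemma aux_sepPts_of_signs {H : Submodule ℝ V} {n : V} (hn : ∀ w : V, ⟪n, w⟫ = 0 ↔ w ∈ H)
    {a b : V} (hab : ⟪n, a⟫ * ⟪n, b⟫ ≤ 0) : SepPts H a b := by
  have hcont : Continuous fun t : ℝ => ⟪n, (1 - t) • a + t • b⟫ := by
    apply continuous_const.inner
    continuity
  have hval : ∀ t : ℝ, ⟪n, (1 - t) • a + t • b⟫ = (1 - t) * ⟪n, a⟫ + t * ⟪n, b⟫ := by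
    intro t
    rw [inner_add_right, real_inner_smul_right, real_inner_smul_right]
  rcases le_or_gt (⟪n, a⟫) 0 with h1 | h1
  · rcases le_or_gt 0 (⟪n, b⟫) with h2 | h2
    · -- f a ≤ 0 ≤ f b : find zero
      set t : ℝ := ⟪n, a⟫ / (⟪n, a⟫ - ⟪n, b⟫) with ht
      by_cases hz : ⟪n, a⟫ = 0
      · exact ⟨a, left_mem_segment ℝ a b, (hn a).mp hz⟩
      · have hz' : ⟪n, a⟫ < 0 := lt_of_le_of_ne h1 hz
        have hden : ⟪n, a⟫ - ⟪n, b⟫ < 0 := by linarith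
        have ht0 : 0 ≤ t := div_nonneg_iff.mpr (Or.inr ⟨h1, hden.le⟩)
        have ht1 : t ≤ 1 := by
          rw [ht, div_le_one_of_neg hden]
          linarith
        refine ⟨(1 - t) • a + t • b, ?_, ?_⟩
        · rw [segment_eq_image ℝ a b]
          exact ⟨t, ⟨ht0, ht1⟩, rfl⟩
        · apply (hn _).mp
          rw [hval, ht]
          have hd' : ⟪n, a⟫ - ⟪n, b⟫ ≠ 0 := hden.ne
          field_simp
          ring
    · -- both ≤ 0, < 0 : product > 0 unless f a = 0
      have : ⟪n, a⟫ = 0 := by nlinarith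
      exact ⟨a, left_mem_segment ℝ a b, (hn a).mp this⟩
  · rcases le_or_gt (⟪n, b⟫) 0 with h2 | h2
    · by_cases hz : ⟪n, b⟫ = 0
      · exact ⟨b, right_mem_segment ℝ a b, (hn b).mp hz⟩
      · set t : ℝ := ⟪n, a⟫ / (⟪n, a⟫ - ⟪n, b⟫) with ht
        have hz' : ⟪n, b⟫ < 0 := lt_of_le_of_ne h2 hz
        have hden : 0 < ⟪n, a⟫ - ⟪n, b⟫ := by linarith
        have ht0 : 0 ≤ t := div_nonneg h1.le hden.le
        have ht1 : t ≤ 1 := by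
          rw [ht, div_le_one hden]
          linarith
        refine ⟨(1 - t) • a + t • b, ?_, ?_⟩
        · rw [segment_eq_image ℝ a b]
          exact ⟨t, ⟨ht0, ht1⟩, rfl⟩
        · apply (hn _).mp
          rw [hval, ht]
          have hd' : ⟪n, a⟫ - ⟪n, b⟫ ≠ 0 := hden.ne'
          field_simp
          ring
    · nlinarith

/-- If the endpoints have the same strict sign, the segment misses the hyperplane. -/
lemma aux_not_sepPts_of_signs {H : Submodule ℝ V} {n : V} (hn : ∀ w : V, ⟪n, w⟫ = 0 ↔ w ∈ H)
    {a b : V} (hab : 0 < ⟪n, a⟫ * ⟪n, b⟫) : ¬ SepPts H a b := by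
  rintro ⟨p, hp, hpH⟩
  rw [segment_eq_image ℝ a b] at hp
  obtain ⟨t, ⟨ht0, ht1⟩, rfl⟩ := hp
  have hval : ⟪n, (1 - t) • a + t • b⟫ = (1 - t) * ⟪n, a⟫ + t * ⟪n, b⟫ := by
    rw [inner_add_right, real_inner_smul_right, real_inner_smul_right]
  have h0 : ⟪n, (1 - t) • a + t • b⟫ = 0 := (hn _).mpr hpH
  rw [hval] at h0
  rcases mul_pos_iff.mp hab with ⟨h1, h2⟩ | ⟨h1, h2⟩
  · have e1 : 0 ≤ (1 - t) * ⟪n, a⟫ := mul_nonneg (by linarith) h1.le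
    have e2 : 0 ≤ t * ⟪n, b⟫ := mul_nonneg ht0 h2.le
    have e3 : (1 - t) * ⟪n, a⟫ = 0 := by linarith
    have e4 : t * ⟪n, b⟫ = 0 := by linarith
    rcases mul_eq_zero.mp e3 with h | h
    · rcases mul_eq_zero.mp e4 with h' | h'
      · linarith
      · linarith
    · linarith
  · have e1 : (1 - t) * ⟪n, a⟫ ≤ 0 := mul_nonpos_of_nonneg_of_nonpos (by linarith) h1.le
    have e2 : t * ⟪n, b⟫ ≤ 0 := mul_nonpos_of_nonneg_of_nonpos ht0 h2.le
    have e3 : (1 - t) * ⟪n, a⟫ = 0 := by linarith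
    have e4 : t * ⟪n, b⟫ = 0 := by linarith
    rcases mul_eq_zero.mp e3 with h | h
    · rcases mul_eq_zero.mp e4 with h' | h'
      · linarith
      · linarith
    · linarith

end Aux
section Aux2

open SemidirectProduct Set

variable {B W : Type*} [Group W] {M : CoxeterMatrix B} {δ : MulAut W}
variable {V : Type*} [NormedAddCommGroup V] [InnerProductSpace ℝ V] [FiniteDimensional ℝ V]
variable (ρ : Wtilde δ →* (V ≃ₗᵢ[ℝ] V))

/-- Conjugation by any element of `W̃` maps `inl W` to itself. -/
lemma aux_conj_inl (y : Wtilde δ) (w : W) : ∃ w' : W, y * inl w * y⁻¹ = inl w' := by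
  refine ⟨y.left * (Subgroup.zpowers δ).subtype y.right w * y.left⁻¹, ?_⟩
  conv_lhs => rw [← inl_left_mul_inr_right y]
  rw [mul_inv_rev]
  have h1 : (inl y.left : Wtilde δ)⁻¹ = inl y.left⁻¹ := by
    rw [← map_inv]
  have h2 : (inr y.right : Wtilde δ)⁻¹ = inr y.right⁻¹ := by
    rw [← map_inv]
  rw [h1, h2]
  have h3 : (inr y.right : Wtilde δ) * inl w * inr y.right⁻¹ =
      inl ((Subgroup.zpowers δ).subtype y.right w) := by
    rw [inl_aut]
  calc inl y.left * inr y.right * inl w * (inr y.right⁻¹ * inl y.left⁻¹)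
      = inl y.left * (inr y.right * inl w * inr y.right⁻¹) * inl y.left⁻¹ := by
        group
    _ = inl y.left * inl ((Subgroup.zpowers δ).subtype y.right w) * inl y.left⁻¹ := by rw [h3]
    _ = inl (y.left * (Subgroup.zpowers δ).subtype y.right w * y.left⁻¹) := by
        rw [← map_mul, ← map_mul]

/-- The image of a mirror under the action of `W̃` is a mirror. -/
lemma aux_mirrors_map {H : Submodule ℝ V} (hH : H ∈ mirrors ρ) (y : Wtilde δ) :
    H.map ((ρ y).toLinearEquiv : V →ₗ[ℝ] V) ∈ mirrors ρ := by
  obtain ⟨hd, w, hw⟩ := hH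
  constructor
  · rw [LinearEquiv.finrank_map_eq (ρ y).toLinearEquiv H]
    exact hd
  · obtain ⟨w', hw'⟩ := aux_conj_inl (δ := δ) y w
    refine ⟨w', ?_⟩
    rw [← hw', map_mul, map_mul, hw, Submodule.reflection_map (𝕜 := ℝ) (ρ y) H]
    ext p
    simp only [LinearIsometryEquiv.trans_apply, LinearIsometryEquiv.coe_mul, map_inv]
    rfl

end Aux2
section Aux3

open SemidirectProduct Set

variable {B W : Type*} [Group W] {M : CoxeterMatrix B} {δ : MulAut W}
variable {V : Type*} [NormedAddCommGroup V] [InnerProductSpace ℝ V] [FiniteDimensional ℝ V]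
variable (ρ : Wtilde δ →* (V ≃ₗᵢ[ℝ] V))

lemma aux_rho_inv_apply (y : Wtilde δ) (a : V) : ρ y⁻¹ (ρ y a) = a := by
  have h : ρ y⁻¹ * ρ y = 1 := by rw [← map_mul, inv_mul_cancel, map_one]
  calc ρ y⁻¹ (ρ y a) = (ρ y⁻¹ * ρ y) a := rfl
    _ = a := by rw [h]; rfl

lemma aux_rho_apply_inv (y : Wtilde δ) (a : V) : ρ y (ρ y⁻¹ a) = a := by
  have h : ρ y * ρ y⁻¹ = 1 := by rw [← map_mul, mul_inv_cancel, map_one]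
  calc ρ y (ρ y⁻¹ a) = (ρ y * ρ y⁻¹) a := rfl
    _ = a := by rw [h]; rfl

lemma aux_map_map (y y' : Wtilde δ) (H : Submodule ℝ V) :
    (H.map ((ρ y').toLinearEquiv : V →ₗ[ℝ] V)).map ((ρ y).toLinearEquiv : V →ₗ[ℝ] V)
      = H.map ((ρ (y * y')).toLinearEquiv : V →ₗ[ℝ] V) := by
  rw [← Submodule.map_comp]
  congr 1
  ext a
  simp only [LinearMap.comp_apply, LinearIsometryEquiv.coe_toLinearEquiv, map_mul]
  rfl

lemma aux_map_one (H : Submodule ℝ V) :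
    H.map ((ρ 1).toLinearEquiv : V →ₗ[ℝ] V) = H := by
  ext a
  constructor
  · rintro ⟨b, hb, rfl⟩
    simpa [map_one] using hb
  · intro ha
    exact ⟨a, ha, by simp [map_one]⟩

lemma aux_map_inv_map (y : Wtilde δ) (H : Submodule ℝ V) :
    (H.map ((ρ y⁻¹).toLinearEquiv : V →ₗ[ℝ] V)).map ((ρ y).toLinearEquiv : V →ₗ[ℝ] V) = H := by
  rw [aux_map_map, mul_inv_cancel, aux_map_one]

lemma aux_mem_map (y : Wtilde δ) {H : Submodule ℝ V} {a : V} :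
    ρ y a ∈ H.map ((ρ y).toLinearEquiv : V →ₗ[ℝ] V) ↔ a ∈ H := by
  constructor
  · rintro ⟨b, hb, hab⟩
    have : b = a := (ρ y).injective hab
    rwa [← this]
  · intro ha
    exact ⟨a, ha, rfl⟩

lemma aux_sepPts_map (y : Wtilde δ) {H : Submodule ℝ V} {a b : V} (h : SepPts H a b) :
    SepPts (H.map ((ρ y).toLinearEquiv : V →ₗ[ℝ] V)) (ρ y a) (ρ y b) := by
  obtain ⟨p, hp, hpH⟩ := h
  refine ⟨ρ y p, ?_, Submodule.mem_map_of_mem hpH⟩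
  have heq := image_segment ℝ ((ρ y).toLinearEquiv : V →ₗ[ℝ] V).toAffineMap a b
  have h2 : ρ y p ∈ (⇑(((ρ y).toLinearEquiv : V →ₗ[ℝ] V).toAffineMap)) '' segment ℝ a b :=
    ⟨p, hp, rfl⟩
  rw [heq] at h2
  exact h2

lemma aux_sepSet_map (y : Wtilde δ) (A A' : Set V) :
    sepSet ρ ((ρ y) '' A) ((ρ y) '' A')
      = (fun H => H.map ((ρ y).toLinearEquiv : V →ₗ[ℝ] V)) '' sepSet ρ A A' := by
  ext H'
  constructor
  · rintro ⟨hm, hsep⟩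
    refine ⟨H'.map ((ρ y⁻¹).toLinearEquiv : V →ₗ[ℝ] V), ⟨aux_mirrors_map ρ hm y⁻¹, ?_⟩,
      aux_map_inv_map ρ y H'⟩
    intro a ha b hb
    have h1 : SepPts H' (ρ y a) (ρ y b) := hsep _ ⟨a, ha, rfl⟩ _ ⟨b, hb, rfl⟩
    have h2 := aux_sepPts_map ρ y⁻¹ h1
    rwa [aux_rho_inv_apply, aux_rho_inv_apply] at h2
  · rintro ⟨H, ⟨hm, hsep⟩, rfl⟩
    refine ⟨aux_mirrors_map ρ hm y, ?_⟩
    rintro _ ⟨a, ha, rfl⟩ _ ⟨b, hb, rfl⟩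
    exact aux_sepPts_map ρ y (hsep a ha b hb)

lemma aux_mirrors_finite [Finite W] : (mirrors ρ).Finite := by
  classical
  have hinj : Function.Injective
      (fun H : ↥(mirrors ρ) => Classical.choose H.prop.2) := by
    intro H₁ H₂ h
    have h₁ := Classical.choose_spec H₁.prop.2
    have h₂ := Classical.choose_spec H₂.prop.2
    have hrefl : (H₁ : Submodule ℝ V).reflection = (H₂ : Submodule ℝ V).reflection := by
      rw [← h₁, ← h₂]
      exact congrArg (fun w => ρ (inl w)) h
    apply Subtype.ext
    ext p
    constructor
    · intro hp
      rw [← Submodule.reflection_eq_self_iff (K := (H₂ : Submodule ℝ V)), ← hrefl]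
      exact (Submodule.reflection_eq_self_iff p).mpr hp
    · intro hp
      rw [← Submodule.reflection_eq_self_iff (K := (H₁ : Submodule ℝ V)), hrefl]
      exact (Submodule.reflection_eq_self_iff p).mpr hp
  have : Finite ↥(mirrors ρ) := Finite.of_injective _ hinj
  exact Set.toFinite _

lemma aux_finite_wtilde [Finite W] : Finite (Wtilde δ) := by
  have h1 : Finite (MulAut W) :=
    Finite.of_injective (fun e : MulAut W => (e : W → W))
      (fun a b h => by ext x; exact congrFun h x)
  have h2 : Finite ↥(Subgroup.zpowers δ) := Subtype.finite
  exact Finite.of_injective (fun x : Wtilde δ => (x.left, x.right))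
    (fun a b h => by
      obtain ⟨h1', h2'⟩ := Prod.mk.injEq _ _ _ _ ▸ h
      exact SemidirectProduct.ext h1' h2')

lemma aux_mem_chamberDom_map (y : Wtilde δ) {a : V} (ha : a ∈ chamberDom ρ) :
    ρ y a ∈ chamberDom ρ := by
  intro H hH hya
  apply ha (H.map ((ρ y⁻¹).toLinearEquiv : V →ₗ[ℝ] V)) (aux_mirrors_map ρ hH y⁻¹)
  have : ρ y⁻¹ (ρ y a) ∈ H.map ((ρ y⁻¹).toLinearEquiv : V →ₗ[ℝ] V) :=
    Submodule.mem_map_of_mem hya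
  rwa [aux_rho_inv_apply] at this

lemma aux_KH_map {K : Submodule ℝ V} (y : Wtilde δ) (hy : ρ y '' (K : Set V) = K)
    {H : Submodule ℝ V} :
    ((K : Set V) ⊆ (H : Set V)
      ↔ (K : Set V) ⊆ ((H.map ((ρ y).toLinearEquiv : V →ₗ[ℝ] V)) : Set V)) := by
  constructor
  · intro hKH k hk
    have : k ∈ ρ y '' (K : Set V) := hy.symm ▸ hk
    obtain ⟨k', hk', rfl⟩ := this
    exact Submodule.mem_map_of_mem (hKH hk')
  · intro hKH k hk
    have h1 : ρ y k ∈ (K : Set V) := hy ▸ ⟨k, hk, rfl⟩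
    have h2 := hKH h1
    exact (aux_mem_map ρ y).mp h2

end Aux3
section Aux4

open SemidirectProduct Set

variable {B W : Type*} [Group W] {M : CoxeterMatrix B} {δ : MulAut W}
variable {V : Type*} [NormedAddCommGroup V] [InnerProductSpace ℝ V] [FiniteDimensional ℝ V]
variable (ρ : Wtilde δ →* (V ≃ₗᵢ[ℝ] V))

local notation "⟪" a ", " b "⟫" => (inner ℝ a b : ℝ)

lemma aux_sepSet_mem_iff {H : Submodule ℝ V} {n : V} (hH : H ∈ mirrors ρ)
    (hn : ∀ w : V, ⟪n, w⟫ = 0 ↔ w ∈ H)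
    {A₁ A₂ : Set V} (h₁ : IsPreconnected A₁) (h₂ : IsPreconnected A₂)
    (hs₁ : A₁ ⊆ chamberDom ρ) (hs₂ : A₂ ⊆ chamberDom ρ)
    {a₁ a₂ : V} (ha₁ : a₁ ∈ A₁) (ha₂ : a₂ ∈ A₂) :
    H ∈ sepSet ρ A₁ A₂ ↔ ¬ (0 < ⟪n, a₁⟫ ↔ 0 < ⟪n, a₂⟫) := by
  have hne₁ : ∀ w ∈ A₁, ⟪n, w⟫ ≠ 0 := fun w hw h => (hs₁ hw H hH) ((hn w).mp h)
  have hne₂ : ∀ w ∈ A₂, ⟪n, w⟫ ≠ 0 := fun w hw h => (hs₂ hw H hH) ((hn w).mp h)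
  constructor
  · intro hsep hiff
    apply aux_not_sepPts_of_signs hn ?_ (hsep.2 a₁ ha₁ a₂ ha₂)
    rcases lt_trichotomy (0:ℝ) ⟪n, a₁⟫ with h | h | h
    · exact mul_pos h (hiff.mp h)
    · exact absurd h.symm (hne₁ a₁ ha₁)
    · have h2 : ⟪n, a₂⟫ < 0 := by
        rcases lt_trichotomy (0:ℝ) ⟪n, a₂⟫ with h' | h' | h'
        · exact absurd (hiff.mpr h') (by linarith)
        · exact absurd h'.symm (hne₂ a₂ ha₂)
        · exact h'
      exact mul_pos_of_neg_of_neg h h2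
  · intro hdiff
    refine ⟨hH, fun a ha b hb => aux_sepPts_of_signs hn ?_⟩
    have hsa : (0 < ⟪n, a⟫ ↔ 0 < ⟪n, a₁⟫) := aux_sign_const h₁ hne₁ ha ha₁
    have hsb : (0 < ⟪n, b⟫ ↔ 0 < ⟪n, a₂⟫) := aux_sign_const h₂ hne₂ hb ha₂
    have hsd : ¬ (0 < ⟪n, a⟫ ↔ 0 < ⟪n, b⟫) := fun h => hdiff ((hsa.symm.trans h).trans hsb)
    rcases lt_trichotomy (0:ℝ) ⟪n, a⟫ with h | h | h
    · have h2 : ¬ (0 < ⟪n, b⟫) := fun h' => hsd ⟨fun _ => h', fun _ => h⟩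
      have h3 : ⟪n, b⟫ ≤ 0 := le_of_not_gt h2
      nlinarith
    · exact absurd h.symm (hne₁ a ha)
    · have h2 : 0 < ⟪n, b⟫ := by
        rcases lt_trichotomy (0:ℝ) ⟪n, b⟫ with h' | h' | h'
        · exact h'
        · exact absurd h'.symm (hne₂ b hb)
        · exact absurd ⟨fun hh => absurd hh (by linarith), fun hh => absurd hh (by linarith)⟩ hsd
      nlinarith

lemma aux_closure_sign {n : V} {A' : Set V} (hA : IsPreconnected A')
    (hsub : ∀ w ∈ A', ⟪n, w⟫ ≠ 0) {c a : V} (hc : c ∈ closure A') (ha : a ∈ A')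
    (hc0 : ⟪n, c⟫ ≠ 0) : (0 < ⟪n, a⟫ ↔ 0 < ⟪n, c⟫) := by
  have hcont : Continuous fun w : V => ⟪n, w⟫ := continuous_const.inner continuous_id
  rcases lt_trichotomy (0:ℝ) ⟪n, a⟫ with h | h | h
  · have hpos : ∀ w ∈ A', 0 ≤ ⟪n, w⟫ := by
      intro w hw
      exact le_of_lt ((aux_sign_const hA hsub ha hw).mp h)
    have hcl : closure A' ⊆ {w : V | 0 ≤ ⟪n, w⟫} := by
      apply closure_minimal hpos
      exact isClosed_le continuous_const hcont
    have : 0 ≤ ⟪n, c⟫ := hcl hc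
    exact ⟨fun _ => lt_of_le_of_ne this (Ne.symm hc0), fun _ => h⟩
  · exact absurd h.symm (hsub a ha)
  · have hneg : ∀ w ∈ A', ⟪n, w⟫ ≤ 0 := by
      intro w hw
      have := (aux_sign_const hA hsub hw ha)
      rcases lt_trichotomy (0:ℝ) ⟪n, w⟫ with h' | h' | h'
      · exact absurd (this.mp h') (by linarith)
      · exact le_of_eq h'.symm
      · exact h'.le
    have hcl : closure A' ⊆ {w : V | ⟪n, w⟫ ≤ 0} := by
      apply closure_minimal hneg
      exact isClosed_le hcont continuous_const
    have h1 : ⟪n, c⟫ ≤ 0 := hcl hc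
    have h2 : ⟪n, c⟫ < 0 := lt_of_le_of_ne h1 hc0
    exact ⟨fun hh => absurd hh (by linarith), fun hh => absurd hh (by linarith)⟩

lemma aux_sep_not_K {K : Submodule ℝ V} {H : Submodule ℝ V} (hH : H ∈ mirrors ρ)
    (hKH : (K : Set V) ⊆ (H : Set V))
    {a b : V} (hab : b ∈ connectedComponentIn (chamberDomK ρ (K : Set V)) a)
    (ha : a ∈ chamberDomK ρ (K : Set V)) : ¬ SepPts H a b := by
  obtain ⟨n, -, hn⟩ := aux_exists_normal ρ hH
  set P := connectedComponentIn (chamberDomK ρ (K : Set V)) a with hP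
  have hPconn : IsPreconnected P := isPreconnected_connectedComponentIn
  have hPsub : P ⊆ chamberDomK ρ (K : Set V) := connectedComponentIn_subset _ _
  have hPne : ∀ w ∈ P, ⟪n, w⟫ ≠ 0 := by
    intro w hw h
    exact (hPsub hw) H hH hKH ((hn w).mp h)
  have haP : a ∈ P := mem_connectedComponentIn ha
  have hsign := aux_sign_const hPconn hPne haP hab
  apply aux_not_sepPts_of_signs hn
  rcases lt_trichotomy (0:ℝ) ⟪n, a⟫ with h | h | h
  · exact mul_pos h (hsign.mp h)
  · exact absurd h.symm (hPne a haP)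
  · have h2 : ⟪n, b⟫ < 0 := by
      rcases lt_trichotomy (0:ℝ) ⟪n, b⟫ with h' | h' | h'
      · exact absurd (hsign.mpr h') (by linarith)
      · exact absurd h'.symm (hPne b hab)
      · exact h'
    exact mul_pos_of_neg_of_neg h h2

lemma aux_inner_xv {x : Wtilde δ} {θ : ℝ} {v : V}
    (hv : ρ x v + ρ x⁻¹ v = (2 * Real.cos θ) • v) :
    ⟪ρ x v, v⟫ = Real.cos θ * ‖v‖^2 := by
  have h1 : ⟪ρ x v + ρ x⁻¹ v, v⟫ = 2 * Real.cos θ * ⟪v, v⟫ := by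
    rw [hv, real_inner_smul_left]
  rw [inner_add_left] at h1
  have h2 : ⟪ρ x⁻¹ v, v⟫ = ⟪ρ x v, v⟫ := by
    have h3 : ⟪ρ x (ρ x⁻¹ v), ρ x v⟫ = ⟪ρ x⁻¹ v, v⟫ := (ρ x).inner_map_map _ _
    rw [aux_rho_apply_inv] at h3
    rw [← h3, real_inner_comm]
  rw [h2, real_inner_self_eq_norm_sq] at h1
  linarith

lemma aux_xv_one {x : Wtilde δ} {θ : ℝ} {v : V}
    (hv : ρ x v + ρ x⁻¹ v = (2 * Real.cos θ) • v) (hcos : Real.cos θ = 1) :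
    ρ x v = v := by
  have h1 : ⟪ρ x v, v⟫ = ‖v‖^2 := by rw [aux_inner_xv ρ hv, hcos, one_mul]
  have h2 : ‖ρ x v - v‖^2 = 0 := by
    rw [norm_sub_sq_real, (ρ x).norm_map, h1]
    ring
  have h3 : ρ x v - v = 0 := by
    rw [← norm_eq_zero]
    nlinarith [norm_nonneg (ρ x v - v)]
  have := sub_eq_zero.mp h3
  exact this

lemma aux_xv_negone {x : Wtilde δ} {θ : ℝ} {v : V}
    (hv : ρ x v + ρ x⁻¹ v = (2 * Real.cos θ) • v) (hcos : Real.cos θ = -1) :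
    ρ x v = -v := by
  have h1 : ⟪ρ x v, v⟫ = -‖v‖^2 := by rw [aux_inner_xv ρ hv, hcos]; ring
  have h2 : ‖ρ x v + v‖^2 = 0 := by
    rw [norm_add_sq_real, (ρ x).norm_map, h1]
    ring
  have h3 : ρ x v + v = 0 := by
    rw [← norm_eq_zero]
    nlinarith [norm_nonneg (ρ x v + v)]
  have : ρ x v = 0 - v := by
    rw [← h3]; abel
  simpa using this


end Aux4
section Aux5

open SemidirectProduct Set Real

variable {B W : Type*} [Group W] {M : CoxeterMatrix B} {δ : MulAut W}
variable {V : Type*} [NormedAddCommGroup V] [InnerProductSpace ℝ V] [FiniteDimensional ℝ V]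
variable (ρ : Wtilde δ →* (V ≃ₗᵢ[ℝ] V))

local notation "⟪" a ", " b "⟫" => (inner ℝ a b : ℝ)

lemma aux_map_inv_map' (y : Wtilde δ) (H : Submodule ℝ V) :
    (H.map ((ρ y).toLinearEquiv : V →ₗ[ℝ] V)).map ((ρ y⁻¹).toLinearEquiv : V →ₗ[ℝ] V) = H := by
  rw [aux_map_map, inv_mul_cancel, aux_map_one]

lemma aux_map_inj (y : Wtilde δ) :
    Function.Injective (fun H : Submodule ℝ V => H.map ((ρ y).toLinearEquiv : V →ₗ[ℝ] V)) := by
  intro H₁ H₂ h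
  have := congrArg (fun H : Submodule ℝ V =>
    H.map ((ρ y⁻¹).toLinearEquiv : V →ₗ[ℝ] V)) h
  simpa only [aux_map_inv_map'] using this

lemma aux_chamber_basic {A : Set V} (hA : IsChamber ρ A) :
    A.Nonempty ∧ IsPreconnected A ∧ A ⊆ chamberDom ρ := by
  obtain ⟨v₀, hv₀, rfl⟩ := hA
  exact ⟨⟨v₀, mem_connectedComponentIn hv₀⟩, isPreconnected_connectedComponentIn,
    connectedComponentIn_subset _ _⟩

lemma aux_chamber_im {A : Set V} (hA : IsChamber ρ A) (y : Wtilde δ) :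
    (ρ y '' A).Nonempty ∧ IsPreconnected (ρ y '' A) ∧ (ρ y '' A) ⊆ chamberDom ρ := by
  obtain ⟨hne, hconn, hsub⟩ := aux_chamber_basic ρ hA
  refine ⟨hne.image _, hconn.image _ (ρ y).continuous.continuousOn, ?_⟩
  rintro _ ⟨a, ha, rfl⟩
  exact aux_mem_chamberDom_map ρ y (hsub ha)

lemma aux_rec {x : Wtilde δ} {θ : ℝ} {v : V}
    (hxu : ρ x (ρ x v) = (2 * Real.cos θ) • (ρ x v) - v) (k : ℕ) :
    Real.sin θ • ρ (x^k) v
      = Real.sin (θ - (k:ℝ)*θ) • v + Real.sin ((k:ℝ)*θ) • (ρ x v) := by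
  induction k with
  | zero => simp
  | succ k ih =>
    have hx : ρ (x^(k+1)) v = ρ x (ρ (x^k) v) := by
      rw [pow_succ', map_mul]
      rfl
    have h1 : Real.sin θ • ρ (x^(k+1)) v = ρ x (Real.sin θ • ρ (x^k) v) := by
      rw [hx, map_smul]
    rw [h1, ih, map_add, map_smul, map_smul, hxu]
    push_cast
    have e1 : Real.sin (θ - ((k:ℝ)+1)*θ) = -Real.sin ((k:ℝ)*θ) := by
      rw [show θ - ((k:ℝ)+1)*θ = -((k:ℝ)*θ) by ring, Real.sin_neg]
    have e2 : Real.sin (((k:ℝ)+1)*θ)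
        = Real.sin ((k:ℝ)*θ) * Real.cos θ + Real.cos ((k:ℝ)*θ) * Real.sin θ := by
      rw [show ((k:ℝ)+1)*θ = (k:ℝ)*θ + θ by ring, Real.sin_add]
    have e3 : Real.sin (θ - (k:ℝ)*θ)
        = Real.sin θ * Real.cos ((k:ℝ)*θ) - Real.cos θ * Real.sin ((k:ℝ)*θ) :=
      Real.sin_sub θ ((k:ℝ)*θ)
    rw [e1, e2, e3]
    module

lemma aux_find_q {x : Wtilde δ} {θ : ℝ} {v : V} {d : ℕ}
    (hv : ρ x v + ρ x⁻¹ v = (2 * Real.cos θ) • v)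
    (hxu : ρ x (ρ x v) = (2 * Real.cos θ) • (ρ x v) - v)
    (hxd : ρ (x^d) v = v) (hv0 : v ≠ 0) (hd : 0 < d)
    (hsin : 0 < Real.sin θ) (hθ0 : 0 < θ) :
    ∃ nn : ℤ, 1 ≤ nn ∧ (d:ℝ) * θ = 2 * π * nn := by
  have hrec := aux_rec ρ hxu d
  rw [hxd] at hrec
  by_cases hsd : Real.sin ((d:ℝ)*θ) = 0
  · rw [hsd, zero_smul, add_zero] at hrec
    have hcoef : Real.sin θ - Real.sin (θ - (d:ℝ)*θ) = 0 := by
      have h2 : (Real.sin θ - Real.sin (θ - (d:ℝ)*θ)) • v = 0 := by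
        rw [sub_smul, hrec, sub_self]
      rcases smul_eq_zero.mp h2 with h | h
      · exact h
      · exact absurd h hv0
    have h3 : Real.sin (θ - (d:ℝ)*θ)
        = Real.sin θ * Real.cos ((d:ℝ)*θ) - Real.cos θ * Real.sin ((d:ℝ)*θ) :=
      Real.sin_sub _ _
    rw [h3, hsd] at hcoef
    have hcos1 : Real.cos ((d:ℝ)*θ) = 1 := by
      have : Real.sin θ * (1 - Real.cos ((d:ℝ)*θ)) = 0 := by linarith
      rcases mul_eq_zero.mp this with h | h
      · exact absurd h hsin.ne'
      · linarith
    obtain ⟨nn, hnn⟩ := (Real.cos_eq_one_iff _).mp hcos1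
    refine ⟨nn, ?_, ?_⟩
    · have hpos : (0:ℝ) < (d:ℝ)*θ := by
        apply mul_pos _ hθ0
        exact_mod_cast hd
      rw [← hnn] at hpos
      have : (0:ℝ) < nn := by nlinarith [Real.pi_pos]
      exact_mod_cast this.le.lt_of_ne (by exact_mod_cast (by nlinarith [Real.pi_pos] : (0:ℝ) ≠ nn))
    · rw [← hnn]; ring
  · -- u is a multiple of v: contradiction
    exfalso
    set u := ρ x v with hu
    have hrec2 : Real.sin ((d:ℝ)*θ) • u = (Real.sin θ - Real.sin (θ - (d:ℝ)*θ)) • v := by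
      rw [sub_smul, hrec]; abel
    set c : ℝ := (Real.sin θ - Real.sin (θ - (d:ℝ)*θ)) / Real.sin ((d:ℝ)*θ) with hc
    have hcv : u = c • v := by
      have h6 := congrArg (fun w => (Real.sin ((d:ℝ)*θ))⁻¹ • w) hrec2
      rw [smul_smul, inv_mul_cancel₀ hsd, one_smul, smul_smul] at h6
      rw [h6, hc]
      congr 1
      field_simp
    have hnorm : ‖u‖ = ‖v‖ := (ρ x).norm_map v
    have hinner : ⟪u, v⟫ = Real.cos θ * ‖v‖^2 := aux_inner_xv ρ hv
    have hcu : c * ‖v‖^2 = Real.cos θ * ‖v‖^2 := by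
      rw [← hinner, hcv, real_inner_smul_left, real_inner_self_eq_norm_sq]
    have hvn : ‖v‖ ≠ 0 := norm_ne_zero_iff.mpr hv0
    have hceq : c = Real.cos θ := by
      have h2 : ‖v‖^2 ≠ 0 := pow_ne_zero 2 hvn
      exact mul_right_cancel₀ h2 hcu
    have habs : |c| = 1 := by
      have h7 : ‖c • v‖ = ‖v‖ := by rw [← hcv, hnorm]
      rw [norm_smul, Real.norm_eq_abs] at h7
      exact mul_right_cancel₀ hvn (h7.trans (one_mul ‖v‖).symm)
    have : Real.sin θ ^ 2 = 0 := by
      have h4 := Real.sin_sq_add_cos_sq θ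
      have h5 : Real.cos θ ^ 2 = 1 := by
        rw [← hceq]
        rcases abs_eq (by norm_num : (0:ℝ) ≤ 1) |>.mp habs with h | h <;> rw [h] <;> ring
      linarith
    nlinarith

end Aux5

local notation "⟪" a ", " b "⟫" => (inner ℝ a b : ℝ)

open SemidirectProduct in
/-- let `K ⊆ V^θ_{w̃}` be a subspace with `w̃(K) = K`, and let `A` be a chamber
such that `A` and `w̃(A)` lie in the same connected component of `V − ∪_{H ∈ 𝔥_K} H` and
`Ā` contains a nonzero `v ∈ K` such that every mirror containing both `v` and `w̃(v)`
contains `K`.  Then `ℓ(w̃_A) = #𝔥(A, w̃(A)) = (θ/π)·#(𝔥 − 𝔥_K)`. -/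
theorem stmt_6 {B W : Type*} [Group W] [Finite W] {M : CoxeterMatrix B}
    (cs : CoxeterSystem M W) (δ : MulAut W)
    (hδ : (δ : W ≃* W) '' (Set.range cs.simple) = Set.range cs.simple)
    {V : Type*} [NormedAddCommGroup V] [InnerProductSpace ℝ V] [FiniteDimensional ℝ V]
    (ρ : Wtilde δ →* (V ≃ₗᵢ[ℝ] V)) (hρ : Function.Injective ρ)
    (hrefl : ∀ i : B, ∃ H : Submodule ℝ V, Module.finrank ℝ H + 1 = Module.finrank ℝ V ∧
      ρ (inl (cs.simple i)) = H.reflection)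
    (C : Set V) (hC : IsChamber ρ C)
    -- `ℓ(w̃_A) = #𝔥(A, w̃(A))` for every chamber `A = z(C)` (part of the context)
    (hlen : ∀ (z : W) (x : Wtilde δ),
      tlen cs ((inl z)⁻¹ * x * inl z) =
        (sepSet ρ (ρ (inl z) '' C) (ρ x '' (ρ (inl z) '' C))).ncard)
    -- the element `w̃`, the angle `θ`, and the `w̃`-stable subspace `K ⊆ V^θ_{w̃}`
    (x : Wtilde δ) (θ : ℝ) (hθ : θ ∈ Set.Icc 0 Real.pi)
    (K : Submodule ℝ V) (hK : K ≤ eigSp ρ x θ)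
    (hKstab : ρ x '' (K : Set V) = (K : Set V))
    -- the chamber `A`, with `A` and `w̃(A)` in the same component of `V − ∪_{H∈𝔥_K} H`
    (A : Set V) (hA : IsChamber ρ A) (xA : W) (hxA : ρ (inl xA) '' C = A)
    (hcomp : ∃ a ∈ A, ∃ b ∈ ρ x '' A, b ∈ connectedComponentIn (chamberDomK ρ (K : Set V)) a)
    -- `Ā` contains a nonzero `v ∈ K` with: every mirror containing `v` and `w̃(v)` contains `K`
    (hv : ∃ v : V, v ∈ K ∧ v ≠ 0 ∧ v ∈ closure A ∧
      ∀ H ∈ mirrors ρ, v ∈ H → ρ x v ∈ H → (K : Set V) ⊆ (H : Set V)) :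
    tlen cs ((inl xA)⁻¹ * x * inl xA) = (sepSet ρ A (ρ x '' A)).ncard ∧
    (tlen cs ((inl xA)⁻¹ * x * inl xA) : ℝ) * Real.pi =
      θ * ((mirrors ρ \ {H : Submodule ℝ V | (K : Set V) ⊆ (H : Set V)}).ncard : ℝ) := by
  classical
  have hconj1 : tlen cs ((inl xA)⁻¹ * x * inl xA) = (sepSet ρ A (ρ x '' A)).ncard := by
    have := hlen xA x
    rwa [hxA] at this
  refine ⟨hconj1, ?_⟩
  rw [hconj1]
  obtain ⟨v, hvK, hv0, hvA, hreg⟩ := hv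
  have heigv : ρ x v + ρ x⁻¹ v = (2 * Real.cos θ) • v := hK hvK
  have hxvK : ρ x v ∈ K := by
    rw [← SetLike.mem_coe, ← hKstab]
    exact ⟨v, hvK, rfl⟩
  have heigu : ρ x (ρ x v) + ρ x⁻¹ (ρ x v) = (2 * Real.cos θ) • (ρ x v) := hK hxvK
  have hxu : ρ x (ρ x v) = (2 * Real.cos θ) • (ρ x v) - v := by
    have h2 : ρ x⁻¹ (ρ x v) = v := aux_rho_inv_apply ρ x v
    rw [h2] at heigu
    exact eq_sub_of_add_eq heigu
  -- basic chamber facts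
  obtain ⟨hAne, hAconn, hAsub⟩ := aux_chamber_basic ρ hA
  obtain ⟨a₀, ha₀⟩ := hAne
  have hfinM : (mirrors ρ).Finite := aux_mirrors_finite ρ
  haveI hWt : Finite (Wtilde δ) := aux_finite_wtilde
  -- the separating set is disjoint from the mirrors containing K
  have hS0K : ∀ H ∈ sepSet ρ A (ρ x '' A), ¬ (K : Set V) ⊆ (H : Set V) := by
    intro H hH hKH
    obtain ⟨a, haA, b, hbA, hb⟩ := hcomp
    have haD : a ∈ chamberDomK ρ (K : Set V) := fun H' hH' _ h => hAsub haA H' hH' h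
    exact aux_sep_not_K ρ hH.1 hKH hb haD (hH.2 a haA b hbA)
  -- image chamber facts
  have hxAfacts := aux_chamber_im ρ hA x
  obtain ⟨hxAne, hxAconn, hxAsub⟩ := hxAfacts
  -- v in closure of the image chamber
  have hclim : ∀ y : Wtilde δ, ρ y v ∈ closure (ρ y '' A) := by
    intro y
    apply image_closure_subset_closure_image (ρ y).continuous
    exact ⟨v, hvA, rfl⟩
  rcases eq_or_lt_of_le hθ.1 with hθ0 | hθ0
  · -- θ = 0 : the separating set is empty
    have hxv : ρ x v = v := aux_xv_one ρ heigv (by rw [← hθ0]; exact Real.cos_zero)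
    have hempty : sepSet ρ A (ρ x '' A) = ∅ := by
      rw [Set.eq_empty_iff_forall_notMem]
      intro H hH
      obtain ⟨n, hn0, hn⟩ := aux_exists_normal ρ hH.1
      have hnv : ⟪n, v⟫ = 0 := by
        by_contra hnv
        have hAne' : ∀ w ∈ A, ⟪n, w⟫ ≠ 0 := fun w hw h => (hAsub hw H hH.1) ((hn w).mp h)
        have hxAne' : ∀ w ∈ ρ x '' A, ⟪n, w⟫ ≠ 0 :=
          fun w hw h => (hxAsub hw H hH.1) ((hn w).mp h)
        have hvx : v ∈ closure (ρ x '' A) := by rw [← hxv]; exact hclim x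
        have hs1 : (0 < ⟪n, a₀⟫ ↔ 0 < ⟪n, v⟫) :=
          aux_closure_sign hAconn hAne' hvA ha₀ hnv
        have hs2 : (0 < ⟪n, ρ x a₀⟫ ↔ 0 < ⟪n, v⟫) :=
          aux_closure_sign hxAconn hxAne' hvx ⟨a₀, ha₀, rfl⟩ hnv
        apply aux_not_sepPts_of_signs hn ?_ (hH.2 a₀ ha₀ (ρ x a₀) ⟨a₀, ha₀, rfl⟩)
        rcases lt_trichotomy (0:ℝ) ⟪n, v⟫ with h | h | h
        · exact mul_pos (hs1.mpr h) (hs2.mpr h)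
        · exact absurd h.symm hnv
        · have h1 : ⟪n, a₀⟫ < 0 := by
            rcases lt_trichotomy (0:ℝ) ⟪n, a₀⟫ with h' | h' | h'
            · exact absurd (hs1.mp h') (by linarith)
            · exact absurd h'.symm (hAne' a₀ ha₀)
            · exact h'
          have h2 : ⟪n, ρ x a₀⟫ < 0 := by
            rcases lt_trichotomy (0:ℝ) ⟪n, ρ x a₀⟫ with h' | h' | h'
            · exact absurd (hs2.mp h') (by linarith)
            · exact absurd h'.symm (hxAne' _ ⟨a₀, ha₀, rfl⟩)
            · exact h'
          exact mul_pos_of_neg_of_neg h1 h2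
      have hvH : v ∈ H := (hn v).mp hnv
      have hxvH : ρ x v ∈ H := by rw [hxv]; exact hvH
      exact hS0K H hH (hreg H hH.1 hvH hxvH)
    rw [hempty, ← hθ0]
    simp
  rcases eq_or_lt_of_le hθ.2 with hθπ | hθπ
  · -- θ = π : the separating set is everything outside the K-mirrors
    have hxv : ρ x v = -v := aux_xv_negone ρ heigv (by rw [hθπ]; exact Real.cos_pi)
    have hall : sepSet ρ A (ρ x '' A)
        = mirrors ρ \ {H : Submodule ℝ V | (K : Set V) ⊆ (H : Set V)} := by
      ext H
      constructor
      · intro hH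
        exact ⟨hH.1, hS0K H hH⟩
      · rintro ⟨hm, hnK⟩
        obtain ⟨n, hn0, hn⟩ := aux_exists_normal ρ hm
        have hnv : ⟪n, v⟫ ≠ 0 := by
          intro h
          have hvH : v ∈ H := (hn v).mp h
          have hxvH : ρ x v ∈ H := by
            rw [hxv]
            exact neg_mem hvH
          exact hnK (hreg H hm hvH hxvH)
        have hAne' : ∀ w ∈ A, ⟪n, w⟫ ≠ 0 := fun w hw h => (hAsub hw H hm) ((hn w).mp h)
        have hxAne' : ∀ w ∈ ρ x '' A, ⟪n, w⟫ ≠ 0 :=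
          fun w hw h => (hxAsub hw H hm) ((hn w).mp h)
        have hmv : ρ x v ∈ closure (ρ x '' A) := hclim x
        have hnxv : ⟪n, ρ x v⟫ ≠ 0 := by
          rw [hxv, inner_neg_right]
          simpa using hnv
        refine ⟨hm, fun a ha b hb => aux_sepPts_of_signs hn ?_⟩
        have hs1 : (0 < ⟪n, a⟫ ↔ 0 < ⟪n, v⟫) :=
          aux_closure_sign hAconn hAne' hvA ha hnv
        have hs2 : (0 < ⟪n, b⟫ ↔ 0 < ⟪n, ρ x v⟫) :=
          aux_closure_sign hxAconn hxAne' hmv hb hnxv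
        have hopp : ⟪n, ρ x v⟫ = -⟪n, v⟫ := by
          rw [hxv, inner_neg_right]
        rcases lt_trichotomy (0:ℝ) ⟪n, v⟫ with h | h | h
        · have h1 : 0 < ⟪n, a⟫ := hs1.mpr h
          have h2 : ⟪n, b⟫ ≤ 0 := by
            by_contra h3
            push_neg at h3
            have := hs2.mp h3
            rw [hopp] at this
            linarith
          nlinarith
        · exact absurd h.symm hnv
        · have h1 : ⟪n, a⟫ ≤ 0 := by
            by_contra h3
            push_neg at h3
            have := hs1.mp h3
            linarith
          have h2 : 0 < ⟪n, b⟫ := by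
            apply hs2.mpr
            rw [hopp]
            linarith
          nlinarith
    rw [hall, hθπ]
    ring
  -- main case : 0 < θ < π
  have hsin : 0 < Real.sin θ := Real.sin_pos_of_pos_of_lt_pi hθ0 hθπ
  set d : ℕ := orderOf x with hddef
  have hd : 0 < d := orderOf_pos x
  have hxd : x ^ d = 1 := pow_orderOf_eq_one x
  have hxdv : ∀ w : V, ρ (x ^ d) w = w := by
    intro w
    rw [hxd, map_one]
    rfl
  obtain ⟨q, hq1, hdθ⟩ := aux_find_q ρ heigv hxu (hxdv v) hv0 hd hsin hθ0
  -- normals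
  have hnormals : ∀ H, H ∈ mirrors ρ → ∃ n : V, n ≠ 0 ∧ ∀ w : V, ⟪n, w⟫ = 0 ↔ w ∈ H :=
    fun H hH => aux_exists_normal ρ hH
  choose! nv hnv0 hnv using hnormals
  -- chambers along the orbit and sign sequences
  set Ak : ℕ → Set V := fun k => ρ (x ^ k) '' A with hAkdef
  have hAkfacts : ∀ k, (Ak k).Nonempty ∧ IsPreconnected (Ak k) ∧ Ak k ⊆ chamberDom ρ :=
    fun k => aux_chamber_im ρ hA (x ^ k)
  have hAkpt : ∀ k, ρ (x ^ k) a₀ ∈ Ak k := fun k => ⟨a₀, ha₀, rfl⟩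
  set σ : ℕ → Submodule ℝ V → Prop := fun k H => 0 < ⟪nv H, ρ (x ^ k) a₀⟫ with hσdef
  -- sepsets along the orbit
  set Sk : ℕ → Set (Submodule ℝ V) := fun k => sepSet ρ (Ak k) (Ak (k + 1)) with hSkdef
  have hA0 : Ak 0 = A := by
    rw [hAkdef]
    simp only [pow_zero, map_one]
    ext w
    constructor
    · rintro ⟨a, ha, rfl⟩
      exact ha
    · intro hw
      exact ⟨w, hw, rfl⟩
  have hAkim : ∀ k, ρ (x ^ k) '' (ρ x '' A) = Ak (k + 1) := by
    intro k
    rw [hAkdef]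
    simp only [← Set.image_comp]
    apply Set.image_congr
    intro a _
    simp only [Function.comp_apply]
    rw [pow_succ, map_mul]
    rfl
  have hSkmap : ∀ k, Sk k
      = (fun H => H.map ((ρ (x ^ k)).toLinearEquiv : V →ₗ[ℝ] V)) '' (sepSet ρ A (ρ x '' A)) := by
    intro k
    have h := aux_sepSet_map ρ (x ^ k) A (ρ x '' A)
    rw [hAkim k] at h
    exact h
  have hSkcard : ∀ k, (Sk k).ncard = (sepSet ρ A (ρ x '' A)).ncard := by
    intro k
    rw [hSkmap k]
    exact Set.ncard_image_of_injective _ (aux_map_inj ρ (x ^ k))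
  have hKpow : ∀ k : ℕ, ρ (x ^ k) '' (K : Set V) = (K : Set V) := by
    intro k
    induction k with
    | zero =>
      simp only [pow_zero, map_one]
      ext w
      constructor
      · rintro ⟨a, ha, rfl⟩
        exact ha
      · intro hw
        exact ⟨w, hw, rfl⟩
    | succ k ih =>
      have h1 : ρ (x ^ (k+1)) '' (K : Set V) = ρ (x ^ k) '' (ρ x '' (K : Set V)) := by
        rw [← Set.image_comp]
        apply Set.image_congr
        intro a _
        rw [pow_succ, map_mul]
        rfl
      rw [h1, hKstab, ih]
  have hSkK : ∀ k, ∀ H ∈ Sk k, ¬ (K : Set V) ⊆ (H : Set V) := by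
    intro k H hH hKH
    rw [hSkmap k] at hH
    obtain ⟨H₀, hH₀, rfl⟩ := hH
    exact hS0K H₀ hH₀ ((aux_KH_map ρ (x ^ k) (hKpow k)).mpr hKH)
  have hmem : ∀ k, ∀ H, H ∈ mirrors ρ → (H ∈ Sk k ↔ ¬ (σ k H ↔ σ (k+1) H)) := by
    intro k H hm
    have hf1 := hAkfacts k
    have hf2 := hAkfacts (k+1)
    exact aux_sepSet_mem_iff ρ hm (hnv H hm) hf1.2.1 hf2.2.1 hf1.2.2 hf2.2.2
      (hAkpt k) (hAkpt (k+1))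
  have hTfin : (mirrors ρ \ {H : Submodule ℝ V | (K : Set V) ⊆ (H : Set V)}).Finite :=
    hfinM.diff
  set 𝔗 : Finset (Submodule ℝ V) := hTfin.toFinset with hTdef
  have hTmem : ∀ H, H ∈ 𝔗 ↔ (H ∈ mirrors ρ ∧ ¬ (K : Set V) ⊆ (H : Set V)) := by
    intro H
    rw [hTdef, Set.Finite.mem_toFinset]
    exact Iff.rfl
  have hSk_eq : ∀ k, Sk k = ↑(𝔗.filter (fun H => ¬ (σ k H ↔ σ (k+1) H))) := by
    intro k
    ext H
    simp only [Finset.coe_filter, Set.mem_setOf_eq, hTmem]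
    constructor
    · intro hH
      have hm : H ∈ mirrors ρ := hH.1
      exact ⟨⟨hm, hSkK k H hH⟩, (hmem k H hm).mp hH⟩
    · rintro ⟨⟨hm, -⟩, hsig⟩
      exact (hmem k H hm).mpr hsig
  have hSkcard2 : ∀ k, ((Sk k).ncard : ℤ)
      = ∑ H ∈ 𝔗, (if σ k H ↔ σ (k+1) H then 0 else 1 : ℤ) := by
    intro k
    rw [hSk_eq k, Set.ncard_coe_finset, Finset.card_filter]
    push_cast
    apply Finset.sum_congr rfl
    intro H _
    by_cases h : σ k H ↔ σ (k+1) H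
    · simp [h]
    · simp [h]
  have hperH : ∀ H ∈ 𝔗,
      ∑ k ∈ Finset.range d, (if σ k H ↔ σ (k+1) H then 0 else 1 : ℤ) = 2 * q := by
    intro H hHT
    obtain ⟨hm, hnK⟩ := (hTmem H).mp hHT
    set n : V := nv H with hndef
    set α : ℝ := Real.sin θ * ⟪n, v⟫ with hαdef
    set β : ℝ := ⟪n, ρ x v⟫ - Real.cos θ * ⟪n, v⟫ with hβdef
    have hg : ∀ k : ℕ, Real.sin θ * ⟪n, ρ (x ^ k) v⟫
        = α * Real.cos ((k:ℝ)*θ) + β * Real.sin ((k:ℝ)*θ) := by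
      intro k
      have h1 := aux_rec ρ hxu k
      have h2 := congrArg (fun w => ⟪n, w⟫) h1
      simp only [inner_add_right, real_inner_smul_right] at h2
      rw [h2, Real.sin_sub, hαdef, hβdef]
      ring
    have hab : ¬ (α = 0 ∧ β = 0) := by
      rintro ⟨hα, hβ'⟩
      have h1 : ⟪n, v⟫ = 0 := by
        rcases mul_eq_zero.mp hα with h | h
        · exact absurd h hsin.ne'
        · exact h
      have h2 : ⟪n, ρ x v⟫ = 0 := by
        rw [hβdef, h1] at hβ'
        linarith
      exact hnK (hreg H hm ((hnv H hm v).mp h1) ((hnv H hm _).mp h2))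
    have hσc : ∀ k : ℕ, α * Real.cos ((k:ℝ)*θ) + β * Real.sin ((k:ℝ)*θ) ≠ 0 →
        ((fun k => σ k H) k ↔ 0 < α * Real.cos ((k:ℝ)*θ) + β * Real.sin ((k:ℝ)*θ)) := by
      intro k hk
      have hgk : ⟪n, ρ (x ^ k) v⟫ ≠ 0 := by
        intro h
        apply hk
        rw [← hg k, h, mul_zero]
      have hf := hAkfacts k
      have hAne' : ∀ w ∈ Ak k, ⟪n, w⟫ ≠ 0 :=
        fun w hw h => (hf.2.2 hw H hm) ((hnv H hm w).mp h)
      have hvcl : ρ (x ^ k) v ∈ closure (Ak k) := hclim (x ^ k)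
      have hs := aux_closure_sign hf.2.1 hAne' hvcl (hAkpt k) hgk
      have hσk : σ k H = (0 < ⟪n, ρ (x ^ k) a₀⟫) := rfl
      show σ k H ↔ _
      rw [hσk, hs]
      constructor
      · intro h
        nlinarith [hg k]
      · intro h
        nlinarith [hg k]
    have hper : (fun k => σ k H) d ↔ (fun k => σ k H) 0 := by
      have e1 : ρ (x ^ d) a₀ = a₀ := hxdv a₀
      have e2 : ρ (x ^ 0) a₀ = a₀ := by
        rw [pow_zero, map_one]
        rfl
      show (0 < ⟪n, ρ (x ^ d) a₀⟫) ↔ (0 < ⟪n, ρ (x ^ 0) a₀⟫)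
      rw [e1, e2]
    exact core_count' hθ0 hθπ hdθ hab (fun k => σ k H) hσc hper
  have htot : (d:ℤ) * ((sepSet ρ A (ρ x '' A)).ncard : ℤ) = (𝔗.card : ℤ) * (2 * q) := by
    have h1 : ∑ k ∈ Finset.range d, ((Sk k).ncard : ℤ)
        = (d:ℤ) * ((sepSet ρ A (ρ x '' A)).ncard : ℤ) := by
      rw [Finset.sum_congr rfl (fun k _ => by rw [hSkcard k])]
      rw [Finset.sum_const, Finset.card_range]
      simp [mul_comm]
    have h2 : ∑ k ∈ Finset.range d, ((Sk k).ncard : ℤ)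
        = ∑ H ∈ 𝔗, ∑ k ∈ Finset.range d, (if σ k H ↔ σ (k+1) H then 0 else 1 : ℤ) := by
      rw [Finset.sum_congr rfl (fun k _ => hSkcard2 k)]
      exact Finset.sum_comm
    rw [← h1, h2, Finset.sum_congr rfl hperH, Finset.sum_const]
    simp [mul_comm]
  have hmcard : ((mirrors ρ \ {H : Submodule ℝ V | (K : Set V) ⊆ (H : Set V)}).ncard) = 𝔗.card := by
    rw [hTdef, ← Set.ncard_coe_finset, Set.Finite.coe_toFinset]
  rw [hmcard]
  have hdR : (0:ℝ) < d := by exact_mod_cast hd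
  have htotR : (d:ℝ) * ((sepSet ρ A (ρ x '' A)).ncard : ℝ) = (𝔗.card : ℝ) * (2 * q) := by
    exact_mod_cast htot
  have hfin : (d:ℝ) * (((sepSet ρ A (ρ x '' A)).ncard : ℝ) * Real.pi)
      = (d:ℝ) * (θ * (𝔗.card : ℝ)) := by
    linear_combination Real.pi * htotR - (𝔗.card : ℝ) * hdθ
  exact mul_left_cancel₀ hdR.ne' hfin
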